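/- Let A be an n×n complex matrix written in block form A = [[A₁, a],[bᵀ, c]], where A₁ is (n−1)×(n−1), a and b are column vectors in ℂⁿ⁻¹, and c ∈ ℂ is the (n,n) entry. Let B be an m×m complex matrix and suppose s, t ∈ ℂᵐ satisfy B·s = c·s, tᵀB = c·tᵀ, and tᵀs = 1. Then the (n−1+m)×(n−1+m) matrix C = [[A₁, a·tᵀ],[s·bᵀ, B]] satisfies the characteristic polynomial identity χ_C(X)·(X − c) = χ_A(X)·χ_B(X); in particular the spectrum of C is the spectrum of A together with the spectrum of B with one copy of c removed. -/

import Mathlib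

open Polynomial Matrix

lemma eval_charpoly_aux {n : Type*} [Fintype n] [DecidableEq n]
    (M : Matrix n n ℂ) (x : ℂ) :
    M.charpoly.eval x = (x • (1 : Matrix n n ℂ) - M).det := by
  rw [Matrix.charpoly, show (Polynomial.eval x : ℂ[X] → ℂ) = (Polynomial.evalRingHom x : ℂ[X] →+* ℂ) from rfl, RingHom.map_det]
  congr 1
  ext i j
  by_cases h : i = j <;>
    simp [h, charmatrix_apply, Matrix.one_apply, Matrix.sub_apply, Matrix.smul_apply,
      Matrix.diagonal_apply]

lemma vecMulVec_mul_mul_vecMulVec {p m : ℕ} (a : Fin p → ℂ) (t : Fin m → ℂ)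
    (M : Matrix (Fin m) (Fin m) ℂ) (s : Fin m → ℂ) (b : Fin p → ℂ) :
    vecMulVec a t * M * vecMulVec s b = (t ⬝ᵥ M.mulVec s) • vecMulVec a b := by
  ext i j
  simp only [Matrix.mul_apply, vecMulVec_apply, dotProduct, Matrix.mulVec,
    Matrix.smul_apply, smul_eq_mul, Finset.sum_mul, Finset.mul_sum]
  rw [Finset.sum_comm]
  apply Finset.sum_congr rfl
  intro k _
  apply Finset.sum_congr rfl
  intro l _
  ring

/-- Šmigoc's gluing lemma (eigenvalue content): if `A = [[A₁, a],[bᵀ, c]]`, and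
`B s = c s`, `tᵀ B = c tᵀ`, `tᵀ s = 1`, then `C = [[A₁, a tᵀ],[s bᵀ, B]]` satisfies
`χ_C(X) (X − c) = χ_A(X) χ_B(X)`. -/
theorem smigoc_glue {p m : ℕ} (A1 : Matrix (Fin p) (Fin p) ℂ)
    (a b : Fin p → ℂ) (c : ℂ)
    (B : Matrix (Fin m) (Fin m) ℂ) (s t : Fin m → ℂ)
    (hs : B.mulVec s = c • s) (ht : t ᵥ* B = c • t) (hts : t ⬝ᵥ s = 1) :
    (Matrix.fromBlocks A1 (vecMulVec a t) (vecMulVec s b) B).charpoly *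
        (X - C c) =
      (Matrix.fromBlocks A1 (fun i _ => a i) (fun _ j => b j) (fun _ _ => c) :
          Matrix (Fin p ⊕ Unit) (Fin p ⊕ Unit) ℂ).charpoly * B.charpoly := by
  have hB0 : B.charpoly ≠ 0 := B.charpoly_monic.ne_zero
  apply Polynomial.eq_of_infinite_eval_eq
  have hfin : Set.Finite ({c} ∪ {x : ℂ | IsRoot B.charpoly x}) :=
    (Set.finite_singleton c).union (Polynomial.finite_setOf_isRoot hB0)
  apply Set.Infinite.mono (s := ({c} ∪ {x : ℂ | IsRoot B.charpoly x})ᶜ)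
  swap
  · exact hfin.infinite_compl
  intro x hx
  simp only [Set.mem_compl_iff, Set.mem_union, Set.mem_singleton_iff, Set.mem_setOf_eq,
    not_or] at hx
  obtain ⟨hxc, hxB⟩ := hx
  -- evaluate
  have hxc' : x - c ≠ 0 := sub_ne_zero.mpr hxc
  have hdetB : (x • (1 : Matrix (Fin m) (Fin m) ℂ) - B).det ≠ 0 := by
    rw [← eval_charpoly_aux]; exact hxB
  set D := x • (1 : Matrix (Fin m) (Fin m) ℂ) - B with hD
  haveI : Invertible D := (Matrix.isUnit_iff_isUnit_det D).mpr
    (isUnit_iff_ne_zero.mpr hdetB) |>.invertible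
  -- key eigenvector fact: ⅟D.mulVec s = (x - c)⁻¹ • s
  have hDs : D.mulVec s = (x - c) • s := by
    simp [hD, Matrix.sub_mulVec, Matrix.smul_mulVec, hs, sub_smul, smul_smul]
  have hinvDs : (⅟D).mulVec s = (x - c)⁻¹ • s := by
    have h1 : (⅟D).mulVec (D.mulVec s) = s := by
      rw [Matrix.mulVec_mulVec, invOf_mul_self, Matrix.one_mulVec]
    rw [hDs, Matrix.mulVec_smul] at h1
    have h2 := congrArg (fun v => (x - c)⁻¹ • v) h1
    simpa [smul_smul, inv_mul_cancel₀ hxc'] using h2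
  -- Unit-block for A
  set DA : Matrix Unit Unit ℂ := Matrix.of (fun _ _ => x - c) with hDA
  haveI : Invertible DA := by
    refine ⟨Matrix.of (fun _ _ => (x - c)⁻¹), ?_, ?_⟩ <;>
      · ext i j
        simp [hDA, Matrix.mul_apply, Matrix.one_apply, inv_mul_cancel₀ hxc',
          mul_inv_cancel₀ hxc', Subsingleton.elim i j]
  -- eval both sides
  simp only [Set.mem_setOf_eq]
  rw [eval_mul, eval_mul, eval_sub, eval_X, eval_C,
    eval_charpoly_aux, eval_charpoly_aux, eval_charpoly_aux]
  have hsplit1 : x • (1 : Matrix (Fin p ⊕ Fin m) (Fin p ⊕ Fin m) ℂ) -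
      fromBlocks A1 (vecMulVec a t) (vecMulVec s b) B =
      fromBlocks (x • 1 - A1) (-(vecMulVec a t)) (-(vecMulVec s b)) D := by
    rw [← fromBlocks_one, fromBlocks_smul]
    ext (i | i) (j | j) <;> simp [hD]
  have hsplit2 : x • (1 : Matrix (Fin p ⊕ Unit) (Fin p ⊕ Unit) ℂ) -
      fromBlocks A1 (fun i _ => a i) (fun _ j => b j) (fun _ _ => c) =
      fromBlocks (x • 1 - A1) (-(Matrix.of fun i (_ : Unit) => a i))
        (-(Matrix.of fun (_ : Unit) j => b j)) DA := by
    rw [← fromBlocks_one, fromBlocks_smul]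
    ext (i | i) (j | j) <;> simp [hDA, Matrix.fromBlocks]
  rw [hsplit1, hsplit2, Matrix.det_fromBlocks₂₂, Matrix.det_fromBlocks₂₂]
  have hDAdet : DA.det = x - c := by simp [hDA]
  -- the two Schur complements are equal
  have hSchur : -(vecMulVec a t) * ⅟D * -(vecMulVec s b) =
      -(Matrix.of fun i (_ : Unit) => a i) * ⅟DA * -(Matrix.of fun (_ : Unit) j => b j) := by
    have hinvDA : (⅟DA : Matrix Unit Unit ℂ) = Matrix.of (fun _ _ => (x - c)⁻¹) :=
      invOf_eq_right_inv (by
        ext i j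
        simp [hDA, Matrix.mul_apply, mul_inv_cancel₀ hxc', Subsingleton.elim i j,
          Matrix.one_apply])
    simp only [Matrix.neg_mul, Matrix.mul_neg, neg_neg]
    rw [vecMulVec_mul_mul_vecMulVec, hinvDs]
    have : t ⬝ᵥ (x - c)⁻¹ • s = (x - c)⁻¹ := by
      rw [dotProduct_smul, hts, smul_eq_mul, mul_one]
    rw [this]
    ext i j
    simp [Matrix.mul_apply, hinvDA, vecMulVec_apply, Finset.sum_const, mul_comm,
      mul_assoc, mul_left_comm]
  rw [hSchur, hDAdet]
  ring
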